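/- Phase-two insertion (first insertion of phase two of Ψ): Let A ⊂ ℤ be a nonempty finite set, let f be a parking function on A with secdinv(f) = 0, let x ∈ ℤ with x ∉ A, set d = maxdiag(f) + 1, and let c be a nonnegative integer such that there exists a label y ∈ A with diag_f(y) = d − 1, col_f(y) > c, and y < x. Then the (c,d)-insertion h of x into f is a parking function on A ∪ {x} with secdinv(h) = 0 and diag_h(x) = d. -/
import Mathlib


/-!
Parking functions on a finite set of integer labels `A ⊆ ℤ`.
A parking function on `A` (with `|A| = m`) is encoded as a function `f : ℤ → ℕ`
which is `0` off `A`, takes values in `{1,…,m}` on `A`, and satisfies the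
parking condition: for every `1 ≤ k ≤ m`, `|{a ∈ A : f a ≤ k}| ≥ k`.
-/

/-- The row of label `a`: the number of labels in strictly smaller columns, plus
the number of labels in the same column that are `≤ a`. -/
def pfRow (A : Finset ℤ) (f : ℤ → ℕ) (a : ℤ) : ℕ :=
  (A.filter fun b => f b < f a).card + (A.filter fun b => f b = f a ∧ b ≤ a).card

/-- The diagonal of label `a`: its row minus its column (the column of `a` is `f a`). -/
def pfDiag (A : Finset ℤ) (f : ℤ → ℕ) (a : ℤ) : ℤ :=
  (pfRow A f a : ℤ) - (f a : ℤ)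

/-- `f : ℤ → ℕ` encodes a parking function on the finite label set `A ⊆ ℤ`. -/
def IsParkingOn (A : Finset ℤ) (f : ℤ → ℕ) : Prop :=
  (∀ a ∈ A, 1 ≤ f a ∧ f a ≤ A.card) ∧
  (∀ a, a ∉ A → f a = 0) ∧
  ∀ k : ℕ, 1 ≤ k → k ≤ A.card → k ≤ (A.filter fun a => f a ≤ k).card

/-- The number of secondary dinv pairs `(a, b)`: pairs with `a < b`,
`diag a = diag b - 1` and `col a > col b`. -/
def secdinv (A : Finset ℤ) (f : ℤ → ℕ) : ℕ :=
  ((A ×ˢ A).filter fun p =>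
    p.1 < p.2 ∧ pfDiag A f p.1 = pfDiag A f p.2 - 1 ∧ f p.2 < f p.1).card

/-- The set of parking functions on `A` with zero secondary dinv. -/
def PFZ (A : Finset ℤ) : Set (ℤ → ℕ) :=
  {f | IsParkingOn A f ∧ secdinv A f = 0}

/-- `pfz n`: the number of parking functions of length `n` (on `{1,…,n}`)
with zero secondary dinv. -/
noncomputable def pfz (n : ℕ) : ℕ := Nat.card (PFZ (Finset.Icc 1 (n : ℤ)))

/-- Insertion `Γ(f, x, k)` of a new label `x` into `f` at column `k`:
`x` gets column `k`; labels in columns `< k` (or in column `k` and smaller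
than `x`) keep their column; the others shift one column to the right. -/
def insertPF (f : ℤ → ℕ) (x : ℤ) (k : ℕ) : ℤ → ℕ := fun a =>
  if a = x then k
  else if f a < k ∨ (f a = k ∧ a < x) then f a
  else f a + 1

/-- The `(c,d)`-insertion of `x ∉ A` into a parking function `f` on `A`:
among the labels `y ∈ A` on diagonal `d - 1` with column `> c` and `y < x`
(these are `y_1, …, y_{ℓ*}` in the paper's notation), take the one with the
largest column; insert `x` at that column (i.e. `Γ(f, x, col(y_{ℓ*}))`), or at
column `c + 1` if there is no such label (`ℓ* = 0`). -/
def specialInsert (A : Finset ℤ) (f : ℤ → ℕ) (x : ℤ) (c : ℕ) (d : ℤ) : ℤ → ℕ :=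
  let T := A.filter fun y => pfDiag A f y = d - 1 ∧ c < f y ∧ y < x
  insertPF f x (if T.Nonempty then T.sup f else c + 1)

/-- Phase-two insertion: let `f` be a parking function on a nonempty `A` with
`secdinv f = 0`, `x ∉ A`, `d = maxdiag f + 1` (expressed by `hd`), and `c` a
nonnegative integer such that some label `y ∈ A` has diagonal `d − 1`,
column `> c`, and `y < x`. Then the `(c,d)`-insertion `h` of `x` into `f` is a
parking function on `A ∪ {x}` with `secdinv h = 0` and `diag_h x = d`. -/
theorem phaseTwoInsert_secdinv (A : Finset ℤ) (hA : A.Nonempty) (f : ℤ → ℕ)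
    (hpf : IsParkingOn A f) (hsd : secdinv A f = 0)
    (x : ℤ) (hx : x ∉ A) (c : ℕ) (d : ℤ)
    (hd : (∀ a ∈ A, pfDiag A f a ≤ d - 1) ∧ ∃ a ∈ A, pfDiag A f a = d - 1)
    (hy : ∃ y ∈ A, pfDiag A f y = d - 1 ∧ c < f y ∧ y < x) :
    IsParkingOn (insert x A) (specialInsert A f x c d) ∧
      secdinv (insert x A) (specialInsert A f x c d) = 0 ∧
      pfDiag (insert x A) (specialInsert A f x c d) x = d := by
  classical
  obtain ⟨y0, hy0A, hy0d, hy0c, hy0x⟩ := hy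
  have hTne : (A.filter fun y => pfDiag A f y = d - 1 ∧ c < f y ∧ y < x).Nonempty :=
    ⟨y0, Finset.mem_filter.mpr ⟨hy0A, hy0d, hy0c, hy0x⟩⟩
  obtain ⟨ys, hysT, hsup⟩ := Finset.exists_mem_eq_sup _ hTne f
  obtain ⟨hysA, hysd, hysc, hysx⟩ := Finset.mem_filter.mp hysT
  set k := f ys with hkdef
  have hspec : specialInsert A f x c d = insertPF f x k := by
    simp only [specialInsert]
    rw [if_pos hTne, hsup]
  rw [hspec]
  set h := insertPF f x k with hhdef
  have hsupk : ∀ z ∈ A, pfDiag A f z = d - 1 → c < f z → z < x → f z ≤ k := by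
    intro z hz h1 h2 h3
    rw [← hsup]
    exact Finset.le_sup (Finset.mem_filter.mpr ⟨hz, h1, h2, h3⟩)
  have hk1 : 1 ≤ k := (hpf.1 ys hysA).1
  have hkm : k ≤ A.card := (hpf.1 ys hysA).2
  -- every label in column k is ≤ ys
  have htop : ∀ b ∈ A, f b = k → b ≤ ys := by
    intro b hb hfb
    rw [hkdef] at hfb
    by_contra hlt
    push_neg at hlt
    have hrow : pfRow A f ys < pfRow A f b := by
      unfold pfRow
      have h1 : (A.filter fun b' => f b' < f ys) = (A.filter fun b' => f b' < f b) := by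
        rw [hfb]
      have h2 : (A.filter fun b' => f b' = f ys ∧ b' ≤ ys).card <
          (A.filter fun b' => f b' = f b ∧ b' ≤ b).card := by
        apply Finset.card_lt_card
        constructor
        · intro z hz
          rw [Finset.mem_filter] at hz ⊢
          exact ⟨hz.1, by rw [hfb]; exact hz.2.1, le_of_lt (lt_of_le_of_lt hz.2.2 hlt)⟩
        · intro hsub
          have := hsub (Finset.mem_filter.mpr ⟨hb, rfl, le_refl b⟩)
          have := (Finset.mem_filter.mp this).2.2
          omega
      rw [h1]
      omega
    have h3 := hd.1 b hb
    have h4 : pfDiag A f b = (pfRow A f b : ℤ) - f b := rfl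
    have h5 : pfDiag A f ys = (pfRow A f ys : ℤ) - f ys := rfl
    rw [hfb] at h4
    omega
  have htopx : ∀ b ∈ A, f b = k → b < x := fun b hb hfb => lt_of_le_of_lt (htop b hb hfb) hysx
  -- values of h
  have hxval : h x = k := by simp [hhdef, insertPF]
  have hvle : ∀ a ∈ A, f a ≤ k → h a = f a := by
    intro a ha hle
    have hax : a ≠ x := fun e => hx (e ▸ ha)
    rcases lt_or_eq_of_le hle with hlt | heq
    · simp [hhdef, insertPF, hax, hlt]
    · simp [hhdef, insertPF, hax, heq, htopx a ha heq]
  have hvgt : ∀ a ∈ A, k < f a → h a = f a + 1 := by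
    intro a ha hgt
    have hax : a ≠ x := fun e => hx (e ▸ ha)
    simp only [hhdef, insertPF, if_neg hax]
    rw [if_neg]
    push_neg
    exact ⟨by omega, fun e => absurd e (by omega)⟩
  have hmono : ∀ a ∈ A, ∀ b ∈ A, (h b < h a ↔ f b < f a) := by
    intro a ha b hb
    rcases le_or_gt (f a) k with h1 | h1 <;> rcases le_or_gt (f b) k with h2 | h2 <;>
      first
        | (rw [hvle a ha h1, hvle b hb h2])
        | (rw [hvle a ha h1, hvgt b hb h2]; omega)
        | (rw [hvgt a ha h1, hvle b hb h2]; omega)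
        | (rw [hvgt a ha h1, hvgt b hb h2]; omega)
  have heqiff : ∀ a ∈ A, ∀ b ∈ A, (h b = h a ↔ f b = f a) := by
    intro a ha b hb
    rcases le_or_gt (f a) k with h1 | h1 <;> rcases le_or_gt (f b) k with h2 | h2 <;>
      first
        | (rw [hvle a ha h1, hvle b hb h2])
        | (rw [hvle a ha h1, hvgt b hb h2]; omega)
        | (rw [hvgt a ha h1, hvle b hb h2]; omega)
        | (rw [hvgt a ha h1, hvgt b hb h2]; omega)
  -- diagonals preserved on A
  have hltk : ∀ b ∈ A, (h b < k ↔ f b < k) := by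
    intro b hb
    rcases le_or_gt (f b) k with h2 | h2
    · rw [hvle b hb h2]
    · rw [hvgt b hb h2]; omega
  have heqk : ∀ b ∈ A, (h b = k ↔ f b = k) := by
    intro b hb
    rcases le_or_gt (f b) k with h2 | h2
    · rw [hvle b hb h2]
    · rw [hvgt b hb h2]; omega
  have hdiag : ∀ a ∈ A, pfDiag (insert x A) h a = pfDiag A f a := by
    intro a ha
    have hax : a ≠ x := fun e => hx (e ▸ ha)
    unfold pfDiag pfRow
    rcases le_or_gt (f a) k with h1 | h1
    · have hha := hvle a ha h1
      have e1 : ((insert x A).filter fun b => h b < h a) = A.filter fun b => f b < f a := by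
        rw [Finset.filter_insert, if_neg (by rw [hxval, hha]; omega)]
        exact Finset.filter_congr fun b hb => hmono a ha b hb
      have e2 : ((insert x A).filter fun b => h b = h a ∧ b ≤ a)
          = A.filter fun b => f b = f a ∧ b ≤ a := by
        rw [Finset.filter_insert, if_neg]
        · exact Finset.filter_congr fun b hb => and_congr_left' (heqiff a ha b hb)
        · rintro ⟨e, hxa⟩
          rw [hxval, hha] at e
          exact absurd (htopx a ha e.symm) (by omega)
      rw [e1, e2, hha]
    · have hha := hvgt a ha h1
      have e1 : ((insert x A).filter fun b => h b < h a)
          = insert x (A.filter fun b => f b < f a) := by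
        rw [Finset.filter_insert, if_pos (by rw [hxval, hha]; omega)]
        congr 1
        exact Finset.filter_congr fun b hb => hmono a ha b hb
      have e2 : ((insert x A).filter fun b => h b = h a ∧ b ≤ a)
          = A.filter fun b => f b = f a ∧ b ≤ a := by
        rw [Finset.filter_insert, if_neg]
        · exact Finset.filter_congr fun b hb => and_congr_left' (heqiff a ha b hb)
        · rintro ⟨e, hxa⟩
          rw [hxval, hha] at e
          omega
      have hxnm : x ∉ A.filter fun b => f b < f a := fun hm => hx (Finset.mem_of_mem_filter x hm)
      rw [e1, e2, hha, Finset.card_insert_of_notMem hxnm]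
      push_cast
      ring
  -- diagonal of x
  have hdx : pfDiag (insert x A) h x = d := by
    unfold pfDiag pfRow
    unfold pfDiag pfRow at hysd
    rw [← hkdef] at hysd
    have e1 : ((insert x A).filter fun b => h b < h x) = A.filter fun b => f b < k := by
      rw [hxval, Finset.filter_insert, if_neg (by omega)]
      exact Finset.filter_congr fun b hb => hltk b hb
    have e2 : ((insert x A).filter fun b => h b = h x ∧ b ≤ x)
        = insert x (A.filter fun b => f b = k) := by
      rw [hxval, Finset.filter_insert, if_pos ⟨hxval, le_refl x⟩]
      congr 1
      apply Finset.filter_congr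
      intro b hb
      constructor
      · rintro ⟨e, _⟩; exact (heqk b hb).mp e
      · intro e; exact ⟨(heqk b hb).mpr e, le_of_lt (htopx b hb e)⟩
    have e3 : (A.filter fun b => f b = k ∧ b ≤ ys) = A.filter fun b => f b = k := by
      apply Finset.filter_congr
      intro b hb
      constructor
      · exact fun e => e.1
      · exact fun e => ⟨e, htop b hb e⟩
    rw [e3] at hysd
    have hxnm : x ∉ A.filter fun b => f b = k := fun hm => hx (Finset.mem_of_mem_filter x hm)
    rw [e1, e2, hxval, Finset.card_insert_of_notMem hxnm]
    push_cast
    push_cast at hysd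
    omega
  refine ⟨?_, ?_, hdx⟩
  · refine ⟨?_, ?_, ?_⟩
    · intro a ha
      rw [Finset.card_insert_of_notMem hx]
      rcases Finset.mem_insert.mp ha with rfl | ha
      · rw [hxval]; omega
      · have := hpf.1 a ha
        rcases le_or_gt (f a) k with h1 | h1
        · rw [hvle a ha h1]; omega
        · rw [hvgt a ha h1]; omega
    · intro a ha
      rw [Finset.mem_insert] at ha
      push_neg at ha
      have hfa : f a = 0 := hpf.2.1 a ha.2
      simp [hhdef, insertPF, ha.1, hfa]
      omega
    · intro k' hk'1 hk'2
      rw [Finset.card_insert_of_notMem hx] at hk'2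
      rcases lt_or_ge k' k with hlt | hge
      · have hsub : (A.filter fun a => f a ≤ k') ⊆ (insert x A).filter fun a => h a ≤ k' := by
          intro z hz
          rw [Finset.mem_filter] at hz
          rw [Finset.mem_filter]
          exact ⟨Finset.mem_insert_of_mem hz.1, by rw [hvle z hz.1 (by omega)]; exact hz.2⟩
        calc k' ≤ (A.filter fun a => f a ≤ k').card := hpf.2.2 k' hk'1 (by omega)
        _ ≤ _ := Finset.card_le_card hsub
      · have hsub : insert x (A.filter fun a => f a ≤ k' - 1)
            ⊆ (insert x A).filter fun a => h a ≤ k' := by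
          intro z hz
          rcases Finset.mem_insert.mp hz with rfl | hz
          · rw [Finset.mem_filter, hxval]
            exact ⟨Finset.mem_insert_self z A, hge⟩
          · rw [Finset.mem_filter] at hz
            rw [Finset.mem_filter]
            refine ⟨Finset.mem_insert_of_mem hz.1, ?_⟩
            rcases le_or_gt (f z) k with h1 | h1
            · rw [hvle z hz.1 h1]; omega
            · rw [hvgt z hz.1 h1]; omega
        have hxnm : x ∉ A.filter fun a => f a ≤ k' - 1 :=
          fun hm => hx (Finset.mem_of_mem_filter x hm)
        have hcard : k' - 1 ≤ (A.filter fun a => f a ≤ k' - 1).card := by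
          rcases Nat.eq_or_lt_of_le hk'1 with e | h2
          · omega
          · exact hpf.2.2 (k' - 1) (by omega) (by omega)
        calc k' ≤ (A.filter fun a => f a ≤ k' - 1).card + 1 := by omega
        _ = (insert x (A.filter fun a => f a ≤ k' - 1)).card :=
            (Finset.card_insert_of_notMem hxnm).symm
        _ ≤ _ := Finset.card_le_card hsub
  · rw [secdinv, Finset.card_eq_zero, Finset.filter_eq_empty_iff]
    rintro ⟨a, b⟩ hab
    rw [Finset.mem_product] at hab
    rintro ⟨h1, h2, h3⟩
    simp only at h1 h2 h3 hab
    rcases Finset.mem_insert.mp hab.1 with ha | ha <;>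
      rcases Finset.mem_insert.mp hab.2 with hb | hb
    · rw [ha, hb] at h1
      exact absurd h1 (lt_irrefl x)
    · rw [ha] at h2 h1
      rw [hdx, hdiag b hb] at h2
      have := hd.1 b hb
      omega
    · rw [hb] at h2 h3 h1
      rw [hdx, hdiag a ha] at h2
      rw [hxval] at h3
      have hka : k < f a := by
        by_contra hle
        push_neg at hle
        rw [hvle a ha hle] at h3
        omega
      have := hsupk a ha (by omega) (by omega) h1
      omega
    · rw [hdiag a ha, hdiag b hb] at h2
      have h3' : f b < f a := (hmono a ha b hb).mp h3
      have hsd' : ((A ×ˢ A).filter fun p =>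
          p.1 < p.2 ∧ pfDiag A f p.1 = pfDiag A f p.2 - 1 ∧ f p.2 < f p.1) = ∅ := by
        rw [← Finset.card_eq_zero]
        exact hsd
      rw [Finset.eq_empty_iff_forall_notMem] at hsd'
      exact hsd' (a, b)
        (Finset.mem_filter.mpr ⟨Finset.mem_product.mpr ⟨ha, hb⟩, h1, h2, h3'⟩)
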